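/- arXiv:0704.3513 — 2 statements merged into one kernel-verified Lean document; each statement's English description precedes it below -/
import Mathlib

section
/- If a topological group G acts on a topological space M and U ⊆ M is a G-invariant open set admitting a G-equivariant homotopy H : U × [0,1] → M with H₀ the inclusion and H₁(U) contained in a single orbit, then the image of U in the orbit space M/G is categorical in M/G (i.e., the inclusion U/G → M/G is homotopic to a constant map). Consequently cat(M/G) ≤ cat_G(M). -/
open Set MulAction

/-- A set is invariant under the action of `G`. -/
def GInvariant (G : Type*) {M : Type*} [SMul G M] (U : Set M) : Prop :=
  ∀ g : G, ∀ x ∈ U, g • x ∈ U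

/-- `U` is a `G`-categorical subset of `A ⊆ M`: it is relatively open in `A`,
`G`-invariant, and admits a `G`-equivariant homotopy inside `A` starting at the
inclusion and ending in a single `G`-orbit. -/
def GCategoricalOn (G : Type*) {M : Type*} [Monoid G] [MulAction G M]
    [TopologicalSpace M] (A U : Set M) : Prop :=
  (∃ V : Set M, IsOpen V ∧ U = V ∩ A) ∧ GInvariant G U ∧
  ∃ H : C(↥U × ℝ, M),
    (∀ x : ↥U, H (x, 0) = ↑x) ∧
    (∀ (x : ↥U) (t : ℝ), t ∈ Icc (0:ℝ) 1 → H (x, t) ∈ A) ∧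
    (∀ (g : G) (x : ↥U) (hgx : g • (x : M) ∈ U) (t : ℝ),
      H (⟨g • (x : M), hgx⟩, t) = g • H (x, t)) ∧
    ∃ y : M, ∀ x : ↥U, H (x, 1) ∈ MulAction.orbit G y

/-- The equivariant Lusternik–Schnirelmann category of the invariant subset `A`,
as an extended natural number: the least cardinality of a cover of `A` by
`G`-categorical subsets of `A` (`⊤` if there is no such cover). -/
noncomputable def equivCatOn (G : Type*) {M : Type*} [Monoid G] [MulAction G M]
    [TopologicalSpace M] (A : Set M) : ℕ∞ :=
  sInf ((fun 𝒰 : Finset (Set M) => (𝒰.card : ℕ∞)) ''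
    {𝒰 | (∀ U ∈ 𝒰, GCategoricalOn G A U) ∧ A ⊆ ⋃₀ ↑𝒰})

/-- The equivariant Lusternik–Schnirelmann category `cat_G(M)`. -/
noncomputable def equivCat (G M : Type*) [Monoid G] [MulAction G M]
    [TopologicalSpace M] : ℕ∞ :=
  equivCatOn G (Set.univ : Set M)

/-- `U` is a categorical subset of the space `X` in the classical sense of
Lusternik and Schnirelmann. -/
def LSCategorical {X : Type*} [TopologicalSpace X] (U : Set X) : Prop :=
  IsOpen U ∧
  ∃ H : C(↥U × ℝ, X), (∀ x : ↥U, H (x, 0) = ↑x) ∧ ∃ y : X, ∀ x : ↥U, H (x, 1) = y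

/-- The classical Lusternik–Schnirelmann category of a space, counting the sets
of a categorical cover. -/
noncomputable def lsCat (X : Type*) [TopologicalSpace X] : ℕ∞ :=
  sInf ((fun 𝒰 : Finset (Set X) => (𝒰.card : ℕ∞)) ''
    {𝒰 | (∀ U ∈ 𝒰, LSCategorical U) ∧ ⋃₀ (↑𝒰 : Set (Set X)) = Set.univ})

section AuxProof

variable {G M : Type*} [Group G] [TopologicalSpace G]
    [IsTopologicalGroup G] [TopologicalSpace M] [MulAction G M] [ContinuousSMul G M]

lemma gcategorical_image_lsCategorical (U : Set M) (h : GCategoricalOn G Set.univ U) :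
    LSCategorical (Quotient.mk (MulAction.orbitRel G M) '' U) := by
  obtain ⟨⟨V, hV, hUV⟩, _hInv, H, hH0, -, hEq, y, hH1⟩ := h
  have hUopen : IsOpen U := by rw [hUV]; simpa using hV
  set Q : M → Quotient (MulAction.orbitRel G M) := Quotient.mk _ with hQ
  have hQoq : IsOpenQuotientMap Q := MulAction.isOpenQuotientMap_quotientMk
  have wd : ∀ (x x' : ↥U), Q ↑x = Q ↑x' → ∀ t : ℝ, Q (H (x, t)) = Q (H (x', t)) := by
    rintro ⟨x, hx⟩ ⟨x', hx'⟩ hxx' t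
    obtain ⟨g, rfl⟩ := MulAction.orbitRel_apply.mp (Quotient.exact hxx')
    have h2 : H ((⟨g • x', hx⟩ : ↥U), t) = g • H ((⟨x', hx'⟩ : ↥U), t) :=
      hEq g ⟨x', hx'⟩ hx t
    rw [h2]
    exact Quotient.sound (MulAction.orbitRel_apply.mpr ⟨g, rfl⟩)
  set QU := Q '' U with hQU
  have memQU : ∀ x : ↥U, Q ↑x ∈ QU := fun x => mem_image_of_mem _ x.2
  set q' : ↥U → ↥QU := fun x => ⟨Q ↑x, memQU x⟩ with hq'
  have hQUopen : IsOpen QU := hQoq.isOpenMap U hUopen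
  have q'surj : Function.Surjective q' := by
    rintro ⟨c, x, hx, rfl⟩; exact ⟨⟨x, hx⟩, rfl⟩
  have q'cont : Continuous q' :=
    Continuous.subtype_mk (hQoq.continuous.comp continuous_subtype_val) _
  have q'open : IsOpenMap q' := by
    intro W hW
    rw [isOpen_induced_iff]
    refine ⟨Q '' ((↑) '' W), hQoq.isOpenMap _ (hUopen.isOpenMap_subtype_val W hW), ?_⟩
    ext c
    constructor
    · rintro ⟨m, ⟨⟨x, hx⟩, hxW, rfl⟩, hQm⟩
      exact ⟨⟨x, hx⟩, hxW, Subtype.ext hQm⟩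
    · rintro ⟨⟨x, hx⟩, hxW, rfl⟩
      exact ⟨x, ⟨⟨x, hx⟩, hxW, rfl⟩, rfl⟩
  have pqm : Topology.IsQuotientMap (Prod.map q' (id : ℝ → ℝ)) :=
    (q'open.prodMap IsOpenMap.id).isQuotientMap (q'cont.prodMap continuous_id)
      (q'surj.prodMap Function.surjective_id)
  have exist : ∀ z : ↥QU, ∃ x : ↥U, q' x = z := q'surj
  set pick : ↥QU → ↥U := fun z => (exist z).choose with hpickdef
  have hpick : ∀ z, q' (pick z) = z := fun z => (exist z).choose_spec
  set f : ↥QU × ℝ → Quotient (MulAction.orbitRel G M) :=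
    fun z => Q (H (pick z.1, z.2)) with hf
  have key : ∀ (x : ↥U) (t : ℝ), f (q' x, t) = Q (H (x, t)) := fun x t =>
    wd _ x (congrArg Subtype.val (hpick (q' x))) t
  have fcont : Continuous f := by
    rw [pqm.continuous_iff]
    have heq2 : f ∘ Prod.map q' id = fun p : ↥U × ℝ => Q (H p) := by
      funext p; exact key p.1 p.2
    rw [heq2]
    exact hQoq.continuous.comp H.continuous
  refine ⟨hQUopen, ⟨f, fcont⟩, ?_, Q y, ?_⟩
  · intro x
    have h0 : (⟨f, fcont⟩ : C(↥QU × ℝ, _)) (x, 0) = Q (H (pick x, 0)) := rfl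
    rw [h0, hH0 (pick x)]
    exact congrArg Subtype.val (hpick x)
  · intro x
    have h1 : (⟨f, fcont⟩ : C(↥QU × ℝ, _)) (x, 1) = Q (H (pick x, 1)) := rfl
    rw [h1]
    exact Quotient.sound (MulAction.orbitRel_apply.mpr (hH1 (pick x)))

end AuxProof


/-- If `U` is a `G`-invariant open set admitting a `G`-equivariant
homotopy from the inclusion into a single orbit (i.e. `U` is `G`-categorical), then
its image in the orbit space `M/G` is categorical in `M/G`.  Consequently
`cat(M/G) ≤ cat_G(M)`. -/
theorem orbitSpace_cat_le_equivCat {G M : Type*} [Group G] [TopologicalSpace G]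
    [IsTopologicalGroup G] [TopologicalSpace M] [MulAction G M] [ContinuousSMul G M] :
    (∀ U : Set M, GCategoricalOn G Set.univ U →
      LSCategorical (Quotient.mk (MulAction.orbitRel G M) '' U)) ∧
    lsCat (Quotient (MulAction.orbitRel G M)) ≤ equivCat G M := by
  classical
  refine ⟨fun U h => gcategorical_image_lsCategorical U h, ?_⟩
  rw [equivCat, equivCatOn]
  refine le_sInf ?_
  rintro b ⟨𝒰, ⟨hcat, hcov⟩, rfl⟩
  set Q : M → Quotient (MulAction.orbitRel G M) := Quotient.mk _ with hQ
  set 𝒱 : Finset (Set (Quotient (MulAction.orbitRel G M))) := 𝒰.image (fun U => Q '' U) with h𝒱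
  have hmem : (fun 𝒲 : Finset (Set (Quotient (MulAction.orbitRel G M))) => (𝒲.card : ℕ∞)) 𝒱 ∈
      ((fun 𝒲 : Finset (Set (Quotient (MulAction.orbitRel G M))) => (𝒲.card : ℕ∞)) ''
        {𝒲 | (∀ V ∈ 𝒲, LSCategorical V) ∧ ⋃₀ (↑𝒲 : Set (Set (Quotient (MulAction.orbitRel G M)))) = Set.univ}) := by
    refine ⟨𝒱, ⟨?_, ?_⟩, rfl⟩
    · intro V hV
      rw [h𝒱] at hV
      obtain ⟨U, hU, rfl⟩ := Finset.mem_image.mp hV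
      exact gcategorical_image_lsCategorical U (hcat U hU)
    · apply Set.eq_univ_of_forall
      intro c
      obtain ⟨x, rfl⟩ := Quot.mk_surjective c
      obtain ⟨U, hU, hxU⟩ := hcov (mem_univ x)
      exact ⟨Q '' U, Finset.mem_coe.mpr (by rw [h𝒱]; exact Finset.mem_image_of_mem _ hU), ⟨x, hxU, rfl⟩⟩
  calc lsCat (Quotient (MulAction.orbitRel G M)) ≤ (𝒱.card : ℕ∞) := sInf_le hmem
    _ ≤ (𝒰.card : ℕ∞) := by rw [h𝒱]; exact_mod_cast Finset.card_image_le
end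

section
/- Let a Lie group G act properly on a manifold M. Then the number of connected components of the fixed point set Fix(G) = {x ∈ M : g·x = x for all g ∈ G} is a lower bound for cat_G(M). -/
open Set MulAction

section Aux


variable {G : Type*} {M : Type*} [Group G] [MulAction G M] [TopologicalSpace M]

/-- Key lemma: if `U` is a `G`-categorical subset of `univ`, then all fixed
points of `U` lie in the same connected component of the fixed-point set. -/
theorem key_component_eq {U : Set M}
    (hcat : (∃ V : Set M, IsOpen V ∧ U = V ∩ (univ : Set M)) ∧ GInvariant G U ∧
      ∃ H : C(↥U × ℝ, M),
        (∀ x : ↥U, H (x, 0) = ↑x) ∧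
        (∀ (x : ↥U) (t : ℝ), t ∈ Icc (0:ℝ) 1 → H (x, t) ∈ (univ : Set M)) ∧
        (∀ (g : G) (x : ↥U) (hgx : g • (x : M) ∈ U) (t : ℝ),
          H (⟨g • (x : M), hgx⟩, t) = g • H (x, t)) ∧
        ∃ y : M, ∀ x : ↥U, H (x, 1) ∈ MulAction.orbit G y)
    {x₁ x₂ : M} (hx₁F : x₁ ∈ fixedPoints G M) (hx₂F : x₂ ∈ fixedPoints G M)
    (hx₁ : x₁ ∈ U) (hx₂ : x₂ ∈ U) :
    connectedComponentIn (fixedPoints G M) x₁ =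
      connectedComponentIn (fixedPoints G M) x₂ := by
  obtain ⟨-, -, H, hH0, -, hHequiv, y, hH1⟩ := hcat
  -- For a fixed point x in U, the whole path t ↦ H(x,t) consists of fixed points.
  have fix_path : ∀ (x : M) (hx : x ∈ U), x ∈ fixedPoints G M →
      ∀ t : ℝ, H (⟨x, hx⟩, t) ∈ fixedPoints G M := by
    intro x hx hxF t g
    have hgx : g • x ∈ U := by rw [hxF g]; exact hx
    have := hHequiv g ⟨x, hx⟩ hgx t
    have hsub : (⟨g • x, hgx⟩ : ↥U) = ⟨x, hx⟩ := Subtype.ext (hxF g)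
    rw [hsub] at this
    exact this.symm
  -- The endpoint of the path for a fixed point is `y` itself.
  have endpoint : ∀ (x : M) (hx : x ∈ U), x ∈ fixedPoints G M →
      H (⟨x, hx⟩, 1) = y := by
    intro x hx hxF
    obtain ⟨g, hg⟩ := hH1 ⟨x, hx⟩
    have hfix := fix_path x hx hxF 1
    have : g⁻¹ • H (⟨x, hx⟩, 1) = y := by rw [← hg]; simp
    rw [← this, hfix g⁻¹]
  -- The path itself connects x to y inside the fixed-point set.
  have comp_eq : ∀ (x : M) (hx : x ∈ U), x ∈ fixedPoints G M →
      connectedComponentIn (fixedPoints G M) x =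
        connectedComponentIn (fixedPoints G M) y := by
    intro x hx hxF
    set γ : ℝ → M := fun t => H (⟨x, hx⟩, t) with hγ
    have hγcont : Continuous γ := H.continuous.comp (by continuity)
    have hconn : IsPreconnected (γ '' Icc (0:ℝ) 1) :=
      (isPreconnected_Icc).image γ hγcont.continuousOn
    have hmemx : x ∈ γ '' Icc (0:ℝ) 1 :=
      ⟨0, by constructor <;> norm_num, hH0 ⟨x, hx⟩⟩
    have hmemy : y ∈ γ '' Icc (0:ℝ) 1 :=
      ⟨1, by constructor <;> norm_num, endpoint x hx hxF⟩
    have hsubF : γ '' Icc (0:ℝ) 1 ⊆ fixedPoints G M := by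
      rintro - ⟨t, -, rfl⟩
      exact fix_path x hx hxF t
    have hy : y ∈ connectedComponentIn (fixedPoints G M) x :=
      hconn.subset_connectedComponentIn hmemx hsubF hmemy
    exact connectedComponentIn_eq hy
  rw [comp_eq x₁ hx₁ hx₁F, comp_eq x₂ hx₂ hx₂F]

end Aux

/-- For a proper smooth action of a Lie group `G` on a manifold
`M`, the number of connected components of the fixed point set
`Fix(G) = {x | g • x = x for all g}` is a lower bound for `cat_G(M)`. -/
theorem encard_components_fixedPoints_le_equivCat
    {EG : Type*} [NormedAddCommGroup EG] [NormedSpace ℝ EG]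
    {HG : Type*} [TopologicalSpace HG] (IG : ModelWithCorners ℝ EG HG)
    {G : Type*} [TopologicalSpace G] [ChartedSpace HG G] [Group G] [LieGroup IG (⊤ : ℕ∞) G]
    {EM : Type*} [NormedAddCommGroup EM] [NormedSpace ℝ EM]
    {HM : Type*} [TopologicalSpace HM] (IM : ModelWithCorners ℝ EM HM)
    {M : Type*} [TopologicalSpace M] [ChartedSpace HM M] [IsManifold IM (⊤ : ℕ∞) M]
    [MulAction G M] [ContinuousSMul G M] [ProperSMul G M]
    (hsmooth : ContMDiff (IG.prod IM) IM (⊤ : ℕ∞) (fun p : G × M => p.1 • p.2)) :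
    {C : Set M | ∃ x ∈ MulAction.fixedPoints G M,
        C = connectedComponentIn (MulAction.fixedPoints G M) x}.encard ≤
      equivCat G M := by
  classical
  unfold equivCat equivCatOn
  refine le_sInf ?_
  rintro - ⟨𝒰, ⟨hcat, hcover⟩, rfl⟩
  set S := {C : Set M | ∃ x ∈ MulAction.fixedPoints G M,
      C = connectedComponentIn (MulAction.fixedPoints G M) x}
  -- choose for each component a member of 𝒰 containing its base point
  have hchoose : ∀ C ∈ S, ∃ U ∈ 𝒰, ∃ x ∈ MulAction.fixedPoints G M,
      x ∈ U ∧ C = connectedComponentIn (MulAction.fixedPoints G M) x := by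
    rintro C ⟨x, hxF, rfl⟩
    have hxU : x ∈ ⋃₀ (↑𝒰 : Set (Set M)) := hcover (mem_univ x)
    obtain ⟨U, hU𝒰, hxU⟩ := hxU
    exact ⟨U, hU𝒰, x, hxF, hxU, rfl⟩
  choose f hf𝒰 pt hptF hptU hptC using hchoose
  have hinj : S.InjOn (fun C => if h : C ∈ S then f C h else ∅) := by
    intro C₁ h₁ C₂ h₂ heq
    simp only at heq
    simp only [dif_pos h₁, dif_pos h₂] at heq
    rw [hptC C₁ h₁, hptC C₂ h₂]
    exact key_component_eq (hcat _ (hf𝒰 C₁ h₁)) (hptF C₁ h₁) (hptF C₂ h₂)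
      (hptU C₁ h₁) (heq ▸ hptU C₂ h₂)
  calc S.encard = ((fun C => if h : C ∈ S then f C h else ∅) '' S).encard :=
        (hinj.encard_image).symm
    _ ≤ (↑𝒰 : Set (Set M)).encard := by
        refine encard_le_encard ?_
        rintro - ⟨C, hC, rfl⟩
        simp only [dif_pos hC]
        exact hf𝒰 C hC
    _ = (𝒰.card : ℕ∞) := encard_coe_eq_coe_finsetCard 𝒰
end
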